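/- Let G be a groupoid with base P acting on a fiber bundle γ: E → P via an action ⇀, and let λ: G → k^× be a character. Form the kG-module k_λE with basis {x_E : E ∈ E} and action g·x_E = λ(g) x_{g⇀E} if e(g) = γ(E), and 0 otherwise. Then k_λE is a simple kG-module if and only if the action is transitive (the image γ(E) is a single equivalence class of the relation on P induced by G) and each fiber γ^{-1}(P) with P ∈ γ(E) has exactly one element. -/

import Mathlib

/-- A (finite) groupoid, presented algebraically: a set `A` of arrows over a base `P`,
with source `s`, target `e`, identities, a (total, junk-valued when undefined)
composition, and inverses. Composition is written left to right: `comp a b` is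
defined when `e a = s b`. -/
structure Gpd (P : Type) (A : Type) where
  s : A → P
  e : A → P
  id : P → A
  comp : A → A → A
  inv : A → A
  s_id : ∀ p, s (id p) = p
  e_id : ∀ p, e (id p) = p
  s_comp : ∀ a b, e a = s b → s (comp a b) = s a
  e_comp : ∀ a b, e a = s b → e (comp a b) = e b
  id_comp : ∀ a, comp (id (s a)) a = a
  comp_id : ∀ a, comp a (id (e a)) = a
  comp_assoc : ∀ a b c, e a = s b → e b = s c →
    comp (comp a b) c = comp a (comp b c)
  s_inv : ∀ a, s (inv a) = e a
  e_inv : ∀ a, e (inv a) = s a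
  inv_comp : ∀ a, comp (inv a) a = id (e a)
  comp_inv : ∀ a, comp a (inv a) = id (s a)

/-- A finite double groupoid: boxes `B`, horizontal arrows `H`, vertical arrows `V`,
points `P`; boxes carry a horizontal groupoid structure over `V`
(source = left side, target = right side) and a vertical groupoid structure over `H`
(source = top side, target = bottom side), compatible with the side groupoids,
satisfying the interchange law. -/
structure DoubleGroupoid where
  P : Type
  H : Type
  V : Type
  B : Type
  [fP : Fintype P]
  [fH : Fintype H]
  [fV : Fintype V]
  [fB : Fintype B]
  [dP : DecidableEq P]
  [dH : DecidableEq H]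
  [dV : DecidableEq V]
  [dB : DecidableEq B]
  /-- horizontal arrows: source `s` = left point, target `e` = right point -/
  gH : Gpd P H
  /-- vertical arrows: source `s` = top point, target `e` = bottom point -/
  gV : Gpd P V
  /-- horizontal composition of boxes; base `V`, source = left side, target = right side -/
  gBh : Gpd V B
  /-- vertical composition of boxes; base `H`, source = top side, target = bottom side -/
  gBv : Gpd H B
  corner_tl : ∀ A, gH.s (gBv.s A) = gV.s (gBh.s A)
  corner_tr : ∀ A, gH.e (gBv.s A) = gV.s (gBh.e A)
  corner_bl : ∀ A, gH.s (gBv.e A) = gV.e (gBh.s A)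
  corner_br : ∀ A, gH.e (gBv.e A) = gV.e (gBh.e A)
  t_hcomp : ∀ A B, gBh.e A = gBh.s B →
    gBv.s (gBh.comp A B) = gH.comp (gBv.s A) (gBv.s B)
  b_hcomp : ∀ A B, gBh.e A = gBh.s B →
    gBv.e (gBh.comp A B) = gH.comp (gBv.e A) (gBv.e B)
  l_vcomp : ∀ A B, gBv.e A = gBv.s B →
    gBh.s (gBv.comp A B) = gV.comp (gBh.s A) (gBh.s B)
  r_vcomp : ∀ A B, gBv.e A = gBv.s B →
    gBh.e (gBv.comp A B) = gV.comp (gBh.e A) (gBh.e B)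
  t_idh : ∀ g, gBv.s (gBh.id g) = gH.id (gV.s g)
  b_idh : ∀ g, gBv.e (gBh.id g) = gH.id (gV.e g)
  l_idv : ∀ x, gBh.s (gBv.id x) = gV.id (gH.s x)
  r_idv : ∀ x, gBh.e (gBv.id x) = gV.id (gH.e x)
  t_hinv : ∀ A, gBv.s (gBh.inv A) = gH.inv (gBv.s A)
  b_hinv : ∀ A, gBv.e (gBh.inv A) = gH.inv (gBv.e A)
  l_vinv : ∀ A, gBh.s (gBv.inv A) = gV.inv (gBh.s A)
  r_vinv : ∀ A, gBh.e (gBv.inv A) = gV.inv (gBh.e A)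
  hinv_vinv : ∀ A, gBh.inv (gBv.inv A) = gBv.inv (gBh.inv A)
  idh_vcomp : ∀ g h, gV.e g = gV.s h →
    gBv.comp (gBh.id g) (gBh.id h) = gBh.id (gV.comp g h)
  idv_hcomp : ∀ x y, gH.e x = gH.s y →
    gBh.comp (gBv.id x) (gBv.id y) = gBv.id (gH.comp x y)
  id_id : ∀ p, gBh.id (gV.id p) = gBv.id (gH.id p)
  interchange : ∀ A B C D,
    gBh.e A = gBh.s B → gBh.e C = gBh.s D →
    gBv.e A = gBv.s C → gBv.e B = gBv.s D →
    gBv.comp (gBh.comp A B) (gBh.comp C D) =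
      gBh.comp (gBv.comp A C) (gBv.comp B D)

namespace DoubleGroupoid

instance (T : DoubleGroupoid) : Fintype T.P := T.fP
instance (T : DoubleGroupoid) : Fintype T.H := T.fH
instance (T : DoubleGroupoid) : Fintype T.V := T.fV
instance (T : DoubleGroupoid) : Fintype T.B := T.fB
instance (T : DoubleGroupoid) : DecidableEq T.P := T.dP
instance (T : DoubleGroupoid) : DecidableEq T.H := T.dH
instance (T : DoubleGroupoid) : DecidableEq T.V := T.dV
instance (T : DoubleGroupoid) : DecidableEq T.B := T.dB

variable (T : DoubleGroupoid)

/-- top side of a box -/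
def top (A : T.B) : T.H := T.gBv.s A
/-- bottom side of a box -/
def bot (A : T.B) : T.H := T.gBv.e A
/-- left side of a box -/
def left (A : T.B) : T.V := T.gBh.s A
/-- right side of a box -/
def right (A : T.B) : T.V := T.gBh.e A

/-- horizontal composition -/
def hcomp (A B : T.B) : T.B := T.gBh.comp A B
/-- vertical composition ("A over B") -/
def vcomp (A B : T.B) : T.B := T.gBv.comp A B
/-- horizontal inverse -/
def hinv (A : T.B) : T.B := T.gBh.inv A
/-- vertical inverse -/
def vinv (A : T.B) : T.B := T.gBv.inv A
/-- total inverse `A⁻¹ = (Aʰ)ᵛ` -/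
def tinv (A : T.B) : T.B := T.gBv.inv (T.gBh.inv A)

/-- top-left vertex -/
def tl (A : T.B) : T.P := T.gH.s (T.top A)
/-- top-right vertex -/
def tr (A : T.B) : T.P := T.gH.e (T.top A)
/-- bottom-left vertex -/
def bl (A : T.B) : T.P := T.gH.s (T.bot A)
/-- bottom-right vertex -/
def br (A : T.B) : T.P := T.gH.e (T.bot A)
/-- right-top vertex (equal to `tr` by the corner compatibilities) -/
def rt (A : T.B) : T.P := T.gV.s (T.right A)
/-- right-bottom vertex -/
def rb (A : T.B) : T.P := T.gV.e (T.right A)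
/-- left-top vertex -/
def lt (A : T.B) : T.P := T.gV.s (T.left A)
/-- left-bottom vertex -/
def lb (A : T.B) : T.P := T.gV.e (T.left A)

/-- upper-left corner function: number of boxes with the same left and top sides -/
noncomputable def ulc (A : T.B) : ℕ :=
  Nat.card {U : T.B // T.left U = T.left A ∧ T.top U = T.top A}
/-- upper-right corner function: number of boxes with the same right and top sides -/
noncomputable def urc (A : T.B) : ℕ :=
  Nat.card {U : T.B // T.right U = T.right A ∧ T.top U = T.top A}
/-- lower-left corner function: number of boxes with the same left and bottom sides -/
noncomputable def llc (A : T.B) : ℕ :=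
  Nat.card {U : T.B // T.left U = T.left A ∧ T.bot U = T.bot A}
/-- lower-right corner function: number of boxes with the same right and bottom sides -/
noncomputable def lrc (A : T.B) : ℕ :=
  Nat.card {U : T.B // T.right U = T.right A ∧ T.bot U = T.bot A}

/-- the double identity box `Θ_P` at a point -/
def thetaBox (p : T.P) : T.B := T.gBv.id (T.gH.id p)

/-- the filling condition: every compatible pair (right side, top side) bounds a box -/
def Filling : Prop :=
  ∀ (g : T.V) (x : T.H), T.gH.e x = T.gV.s g →
    ∃ A : T.B, T.top A = x ∧ T.right A = g

/-- membership in the core groupoid `D`: the left and bottom sides are identities -/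
def isCoreD (D : T.B) : Prop :=
  T.left D = T.gV.id (T.gV.s (T.left D)) ∧ T.bot D = T.gH.id (T.gH.s (T.bot D))

/-- membership in the core groupoid `E`: the right and top sides are identities -/
def isCoreE (E : T.B) : Prop :=
  T.right E = T.gV.id (T.gV.s (T.right E)) ∧ T.top E = T.gH.id (T.gH.s (T.top E))

/-- `θ(p)`: the number of boxes whose left and bottom sides are identities at `p` -/
noncomputable def thetaLB (p : T.P) : ℕ :=
  Nat.card {U : T.B // T.left U = T.gV.id p ∧ T.bot U = T.gH.id p}

end DoubleGroupoid

open scoped Classical in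
/-- the operator by which an arrow `g` of a groupoid `G` acts on the module `k_λE`:
`g ⋅ x_E = λ(g) x_{g ⇀ E}` if `e(g) = γ(E)`, and `0` otherwise. -/
noncomputable def rho (k : Type) [Field k] {P A E : Type} (G : Gpd P A)
    (γ : E → P) (act : A → E → E) (lam : A → kˣ) (g : A) :
    (E →₀ k) →ₗ[k] (E →₀ k) :=
  Finsupp.lsum k fun x => LinearMap.toSpanSingleton k (E →₀ k)
    ((if G.e g = γ x then (lam g : k) else 0) • Finsupp.single (act g x) (1 : k))


section Helpers

open scoped Classical

variable {k : Type} [Field k] {P A E : Type} {G : Gpd P A} {γ : E → P}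
  {act : A → E → E} {lam : A → kˣ}

lemma rho_single (g : A) (x : E) (c : k) :
    rho k G γ act lam g (Finsupp.single x c) =
      c • ((if G.e g = γ x then (lam g : k) else 0) • Finsupp.single (act g x) (1 : k)) := by
  classical
  simp [rho, Finsupp.lsum_single, LinearMap.toSpanSingleton_apply]

lemma lam_id (hlam : ∀ g h, G.e g = G.s h → lam (G.comp g h) = lam g * lam h)
    (p : P) : lam (G.id p) = 1 := by
  have h := hlam (G.id p) (G.id p) (by rw [G.e_id, G.s_id])
  have h2 : G.comp (G.id p) (G.id p) = G.id p := by
    have := G.id_comp (G.id p); rwa [G.s_id] at this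
  rw [h2] at h
  exact (mul_left_cancel (a := lam (G.id p)) (by rw [mul_one, ← h])).symm

lemma rho_rho
    (hγ : ∀ g x, G.e g = γ x → γ (act g x) = G.s g)
    (hact : ∀ g h x, G.e g = G.s h → G.e h = γ x →
      act (G.comp g h) x = act g (act h x))
    (hlam : ∀ g h, G.e g = G.s h → lam (G.comp g h) = lam g * lam h)
    (g' g : A) (f : E →₀ k) :
    rho k G γ act lam g' (rho k G γ act lam g f) =
      if G.e g' = G.s g then rho k G γ act lam (G.comp g' g) f else 0 := by
  classical
  induction f using Finsupp.induction_linear with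
  | zero => simp only [map_zero]; split_ifs <;> simp
  | add f₁ f₂ hf₁ hf₂ =>
      simp only [map_add, hf₁, hf₂]; split_ifs <;> simp
  | single x c =>
      rw [rho_single, map_smul, map_smul, rho_single, one_smul]
      by_cases h1 : G.e g = γ x
      · by_cases h2 : G.e g' = G.s g
        · have e2 : G.e g' = γ (act g x) := by rw [hγ g x h1, h2]
          rw [if_pos h1, if_pos e2, if_pos h2, rho_single,
            if_pos (show G.e (G.comp g' g) = γ x by rw [G.e_comp g' g h2, h1]),
            hact g' g x h2 h1, hlam g' g h2, Units.val_mul]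
          simp only [smul_smul]
          congr 1
          ring
        · have e2 : ¬ G.e g' = γ (act g x) := by rw [hγ g x h1]; exact h2
          simp only [if_pos h1, if_neg e2, if_neg h2, zero_smul, smul_zero]
      · by_cases h2 : G.e g' = G.s g
        · rw [if_neg h1, if_pos h2, rho_single,
            if_neg (show ¬ G.e (G.comp g' g) = γ x by rw [G.e_comp g' g h2]; exact h1)]
          simp only [zero_smul, smul_zero]
        · simp only [if_neg h1, if_neg h2, zero_smul, smul_zero]

lemma orbit_invariant
    (hγ : ∀ g x, G.e g = γ x → γ (act g x) = G.s g)
    (hact : ∀ g h x, G.e g = G.s h → G.e h = γ x →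
      act (G.comp g h) x = act g (act h x))
    (hlam : ∀ g h, G.e g = G.s h → lam (G.comp g h) = lam g * lam h)
    (v : E →₀ k) (g' : A) :
    (Submodule.span k (Set.range fun g => rho k G γ act lam g v)).map
        (rho k G γ act lam g') ≤
      Submodule.span k (Set.range fun g => rho k G γ act lam g v) := by
  classical
  rw [Submodule.map_span, Submodule.span_le]
  rintro _ ⟨_, ⟨g, rfl⟩, rfl⟩
  rw [rho_rho hγ hact hlam]
  split_ifs
  · exact Submodule.subset_span ⟨G.comp g' g, rfl⟩
  · exact Submodule.zero_mem _

end Helpers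

/-- `k_λE` is a simple `kG`-module iff the action is transitive
(the image of `γ` is a single equivalence class of the relation induced by `G`
on the base) and every fiber over a point of the image is a singleton. -/
theorem stmt16 (k P A E : Type) [Field k] [Finite P] [Finite A] [Finite E]
    (G : Gpd P A) (γ : E → P) (act : A → E → E)
    (hγ : ∀ g x, G.e g = γ x → γ (act g x) = G.s g)
    (hid : ∀ x, act (G.id (γ x)) x = x)
    (hact : ∀ g h x, G.e g = G.s h → G.e h = γ x →
      act (G.comp g h) x = act g (act h x))
    (lam : A → kˣ)
    (hlam : ∀ g h, G.e g = G.s h → lam (G.comp g h) = lam g * lam h) :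
    (((⊤ : Submodule k (E →₀ k)) ≠ ⊥) ∧
      ∀ N : Submodule k (E →₀ k),
        (∀ g : A, N.map (rho k G γ act lam g) ≤ N) → N = ⊥ ∨ N = ⊤) ↔
    ((∃ p : P, Set.range γ = {q | ∃ g : A, G.s g = p ∧ G.e g = q}) ∧
      ∀ p ∈ Set.range γ, Nat.card {x : E // γ x = p} = 1) := by
  classical
  constructor
  · rintro ⟨hnt, hsimp⟩
    -- E is nonempty
    have hE : Nonempty E := by
      by_contra h
      apply hnt
      ext f
      simp only [Submodule.mem_top, Submodule.mem_bot, true_iff]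
      ext x
      exact absurd (Nonempty.intro x) h
    -- fibers are subsingletons
    have claim : ∀ (y z : E), γ y = γ z → y = z := by
      intro y z hyz
      by_contra hne
      set v : E →₀ k := Finsupp.single y 1 - Finsupp.single z 1 with hv
      set N := Submodule.span k (Set.range fun g => rho k G γ act lam g v) with hNdef
      have hinv : ∀ g, N.map (rho k G γ act lam g) ≤ N :=
        fun g => orbit_invariant hγ hact hlam v g
      have hrv : rho k G γ act lam (G.id (γ y)) v = v := by
        rw [hv, map_sub, rho_single, rho_single, G.e_id]
        rw [if_pos rfl, if_pos hyz, lam_id hlam, Units.val_one, one_smul, one_smul,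
          one_smul, one_smul, hid y]
        have : act (G.id (γ y)) z = z := by rw [hyz]; exact hid z
        rw [this]
      have hvN : v ∈ N := hrv ▸ Submodule.subset_span ⟨G.id (γ y), rfl⟩
      have hv0 : v ≠ 0 := by
        intro h
        have := DFunLike.congr_fun h y
        rw [hv] at this
        simp [Finsupp.single_apply, hne, Ne.symm hne] at this
      rcases hsimp N hinv with h | h
      · rw [h, Submodule.mem_bot] at hvN
        exact hv0 hvN
      · set φ : (E →₀ k) →ₗ[k] k := Finsupp.lsum k fun _ => LinearMap.id with hφ
        have hker : N ≤ LinearMap.ker φ := by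
          rw [hNdef, Submodule.span_le]
          rintro _ ⟨g, rfl⟩
          simp only [SetLike.mem_coe, LinearMap.mem_ker]
          rw [hv, map_sub, rho_single, rho_single, one_smul, one_smul]
          by_cases hg : G.e g = γ y
          · rw [if_pos hg, if_pos (hyz ▸ hg), map_sub, map_smul, map_smul, hφ,
              Finsupp.lsum_single, Finsupp.lsum_single]
            simp
          · rw [if_neg hg, if_neg (hyz ▸ hg), zero_smul, zero_smul, sub_zero, map_zero]
        have h1 : Finsupp.single y (1 : k) ∈ LinearMap.ker φ :=
          hker (h ▸ Submodule.mem_top)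
        rw [LinearMap.mem_ker, hφ, Finsupp.lsum_single] at h1
        exact one_ne_zero h1
    refine ⟨?_, ?_⟩
    · -- transitivity
      obtain ⟨x₀⟩ := hE
      refine ⟨γ x₀, ?_⟩
      ext q
      constructor
      · rintro ⟨z, rfl⟩
        set v : E →₀ k := Finsupp.single x₀ 1 with hv
        set N := Submodule.span k (Set.range fun g => rho k G γ act lam g v) with hNdef
        have hinv : ∀ g, N.map (rho k G γ act lam g) ≤ N :=
          fun g => orbit_invariant hγ hact hlam v g
        have hrv : rho k G γ act lam (G.id (γ x₀)) v = v := by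
          rw [hv, rho_single, G.e_id, if_pos rfl, lam_id hlam, Units.val_one,
            one_smul, one_smul, hid x₀]
        have hvN : v ∈ N := hrv ▸ Submodule.subset_span ⟨G.id (γ x₀), rfl⟩
        have hNtop : N = ⊤ := by
          rcases hsimp N hinv with h | h
          · rw [h, Submodule.mem_bot] at hvN
            exact (one_ne_zero (Finsupp.single_eq_zero.mp hvN)).elim
          · exact h
        set S : Set E := {w | ∃ g, G.e g = γ x₀ ∧ act g x₀ = w} with hS
        have hsub : N ≤ Finsupp.supported k k S := by
          rw [hNdef, Submodule.span_le]
          rintro _ ⟨g, rfl⟩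
          simp only [SetLike.mem_coe, Finsupp.mem_supported]
          rw [hv, rho_single, one_smul]
          by_cases hg : G.e g = γ x₀
          · rw [if_pos hg]
            refine subset_trans (Finsupp.support_smul) ?_
            refine subset_trans ?_ (Set.singleton_subset_iff.mpr ⟨g, hg, rfl⟩)
            intro w hw
            have := Finsupp.support_single_subset hw
            simpa using this
          · rw [if_neg hg, zero_smul]
            simp
        have hz : Finsupp.single z (1 : k) ∈ Finsupp.supported k k S :=
          hsub (hNtop ▸ Submodule.mem_top)
        rw [Finsupp.mem_supported] at hz
        have hzS : z ∈ S := hz (by simp)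
        obtain ⟨g, hg1, hg2⟩ := hzS
        refine ⟨G.inv g, by rw [G.s_inv, hg1], ?_⟩
        rw [G.e_inv, ← hg2, hγ g x₀ hg1]
      · rintro ⟨g, hg1, hg2⟩
        have he : G.e (G.inv g) = γ x₀ := by rw [G.e_inv, hg1]
        exact ⟨act (G.inv g) x₀, by rw [hγ _ _ he, G.s_inv, hg2]⟩
    · intro p hp
      obtain ⟨x, hx⟩ := hp
      rw [Nat.card_eq_one_iff_unique]
      exact ⟨⟨fun a b => Subtype.ext (claim a.1 b.1 (by rw [a.2, b.2]))⟩, ⟨⟨x, hx⟩⟩⟩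
  · rintro ⟨⟨p, hp⟩, hfib⟩
    have hpr : p ∈ Set.range γ := by
      rw [hp]; exact ⟨G.id p, G.s_id p, G.e_id p⟩
    obtain ⟨x₀, hx₀⟩ := hpr
    have fib_eq : ∀ {y z : E}, γ y = γ z → y = z := by
      intro y z h
      have h1 : γ z ∈ Set.range γ := ⟨z, rfl⟩
      haveI := (Nat.card_eq_one_iff_unique.mp (hfib (γ z) h1)).1
      exact congrArg Subtype.val (Subsingleton.elim (⟨y, h⟩ : {x // γ x = γ z}) ⟨z, rfl⟩)
    constructor
    · intro h
      have h1 : Finsupp.single x₀ (1 : k) ∈ (⊥ : Submodule k (E →₀ k)) :=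
        h ▸ Submodule.mem_top
      rw [Submodule.mem_bot] at h1
      exact one_ne_zero (Finsupp.single_eq_zero.mp h1)
    · intro N hNinv
      by_cases hbot : N = ⊥
      · exact Or.inl hbot
      refine Or.inr ?_
      obtain ⟨f, hfN, hf0⟩ := (Submodule.ne_bot_iff N).mp hbot
      obtain ⟨x, hxs⟩ := Finsupp.support_nonempty_iff.mpr hf0
      have hfx : f x ≠ 0 := Finsupp.mem_support_iff.mp hxs
      have hstep : rho k G γ act lam (G.id (γ x)) f = f x • Finsupp.single x (1 : k) := by
        rw [rho, Finsupp.lsum_apply, Finsupp.sum]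
        rw [Finset.sum_eq_single x]
        · rw [LinearMap.toSpanSingleton_apply, G.e_id, if_pos rfl, hid x,
            lam_id hlam, Units.val_one, one_smul]
        · intro b _ hbx
          rw [LinearMap.toSpanSingleton_apply]
          have hne : ¬ G.e (G.id (γ x)) = γ b := by
            rw [G.e_id]
            intro h
            exact hbx (fib_eq h).symm
          rw [if_neg hne, zero_smul, smul_zero]
        · intro hx'
          rw [Finsupp.notMem_support_iff.mp hx', map_zero]
      have hsingle : Finsupp.single x (1 : k) ∈ N := by
        have h1 : rho k G γ act lam (G.id (γ x)) f ∈ N :=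
          hNinv _ ⟨f, hfN, rfl⟩
        rw [hstep] at h1
        have h2 := N.smul_mem (f x)⁻¹ h1
        rwa [smul_smul, inv_mul_cancel₀ hfx, one_smul] at h2
      have hall : ∀ y : E, Finsupp.single y (1 : k) ∈ N := by
        intro y
        have hxr : γ x ∈ Set.range γ := ⟨x, rfl⟩
        have hyr : γ y ∈ Set.range γ := ⟨y, rfl⟩
        rw [hp] at hxr hyr
        obtain ⟨g₁, hs₁, he₁⟩ := hxr
        obtain ⟨g₂, hs₂, he₂⟩ := hyr
        have hcomp : G.e (G.inv g₂) = G.s g₁ := by rw [G.e_inv, hs₂, hs₁]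
        set g := G.comp (G.inv g₂) g₁ with hg
        have heg : G.e g = γ x := by rw [hg, G.e_comp _ _ hcomp, he₁]
        have hsg : G.s g = γ y := by rw [hg, G.s_comp _ _ hcomp, G.s_inv, he₂]
        have h2 : rho k G γ act lam g (Finsupp.single x (1 : k)) ∈ N :=
          hNinv _ ⟨_, hsingle, rfl⟩
        rw [rho_single, one_smul, if_pos heg] at h2
        have hy : act g x = y := fib_eq (by rw [hγ g x heg, hsg])
        rw [hy] at h2
        have h3 := N.smul_mem ((lam g : k))⁻¹ h2
        rwa [smul_smul, inv_mul_cancel₀ (Units.ne_zero _), one_smul] at h3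
      rw [Submodule.eq_top_iff']
      intro f'
      rw [← Finsupp.sum_single f']
      refine Submodule.sum_mem N fun z _ => ?_
      have : Finsupp.single z (f' z) = f' z • Finsupp.single z (1 : k) := by
        rw [Finsupp.smul_single, smul_eq_mul, mul_one]
      rw [this]
      exact N.smul_mem _ (hall z)
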